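/- Let L₀ψ = ψ'' + F'(w)ψ with F(u) = u - u³ and w = tanh(z/√2). Then there exists γ > 0 such that for every ψ ∈ H¹(ℝ) with ∫_ℝ ψ w' dt = 0, one has ∫_ℝ ( |ψ'|² - F'(w)ψ² ) dt ≥ γ ∫_ℝ ( |ψ'|² + ψ² ) dt. -/

import Mathlib

open Real MeasureTheory Set Filter Topology

noncomputable section AC

def S2 : ℝ := Real.sqrt 2

lemma S2_pos : 0 < S2 := Real.sqrt_pos.2 (by norm_num)
lemma S2_sq : S2 ^ 2 = 2 := Real.sq_sqrt (by norm_num)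
lemma S2_ne : S2 ≠ 0 := ne_of_gt S2_pos
lemma S2_ge1 : 1 ≤ S2 := by nlinarith [S2_sq, S2_pos]
lemma S2_le : S2 ≤ 3/2 := by nlinarith [S2_sq, S2_pos]

def Wt : ℝ → ℝ := fun z => Real.tanh (z / Real.sqrt 2)
def Et : ℝ → ℝ := fun z => 1 / (S2 * Real.cosh (z / S2) ^ 2)

lemma cosh_ne (y : ℝ) : Real.cosh y ≠ 0 := ne_of_gt (Real.cosh_pos y)

lemma Wt_eq (z : ℝ) : Wt z = Real.sinh (z / S2) / Real.cosh (z / S2) :=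
  Real.tanh_eq_sinh_div_cosh _

lemma Et_pos (z : ℝ) : 0 < Et z :=
  one_div_pos.2 (mul_pos S2_pos (pow_pos (Real.cosh_pos _) 2))

lemma hW (z : ℝ) : HasDerivAt Wt (Et z) z := by
  have h1 : HasDerivAt (fun z : ℝ => z / S2) (1 / S2) z := by
    simpa using (hasDerivAt_id z).div_const S2
  have h2 : HasDerivAt (fun y : ℝ => Real.sinh y / Real.cosh y)
      ((Real.cosh (z / S2) * Real.cosh (z / S2) -
        Real.sinh (z / S2) * Real.sinh (z / S2)) / Real.cosh (z / S2) ^ 2) (z / S2) :=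
    (Real.hasDerivAt_sinh _).div (Real.hasDerivAt_cosh _) (cosh_ne _)
  have h3 := h2.comp z h1
  have he : Wt = fun z => Real.sinh (z / S2) / Real.cosh (z / S2) := by
    funext t; exact Wt_eq t
  rw [he]
  refine h3.congr_deriv ?_
  have hnum : Real.cosh (z / S2) * Real.cosh (z / S2) -
      Real.sinh (z / S2) * Real.sinh (z / S2) = 1 := by
    linear_combination Real.cosh_sq_sub_sinh_sq (z / S2)
  rw [hnum]
  simp only [Et]
  ring

lemma hW2 (z : ℝ) : 1 - Wt z ^ 2 = S2 * Et z := by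
  have hc := Real.cosh_sq_sub_sinh_sq (z / S2)
  rw [Wt_eq]
  simp only [Et]
  have hcne := cosh_ne (z / S2)
  have hS := S2_ne
  have h1 : S2 * (1 / (S2 * Real.cosh (z / S2) ^ 2)) = 1 / Real.cosh (z / S2) ^ 2 := by
    field_simp
  rw [h1, div_pow, sub_eq_iff_eq_add, ← add_div, eq_div_iff (pow_ne_zero 2 hcne)]
  linear_combination hc

lemma Wt_sq_le (z : ℝ) : Wt z ^ 2 ≤ 1 := by
  have := hW2 z; nlinarith [Et_pos z, S2_pos]

lemma Et_le (z : ℝ) : Et z ≤ 1 := by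
  have h := Real.one_le_cosh (z / S2)
  have hc := Real.cosh_pos (z / S2)
  rw [Et, div_le_one (mul_pos S2_pos (pow_pos hc 2))]
  nlinarith [S2_ge1, sq_nonneg (Real.cosh (z / S2) - 1)]

lemma S2Et_le_one (z : ℝ) : S2 * Et z ≤ 1 := by
  have := hW2 z; nlinarith [sq_nonneg (Wt z)]

lemma hE (z : ℝ) : HasDerivAt Et (-(S2 * Wt z * Et z)) z := by
  have h1 : HasDerivAt (fun z : ℝ => z / S2) (1 / S2) z := by
    simpa using (hasDerivAt_id z).div_const S2
  have h2 : HasDerivAt (fun z : ℝ => Real.cosh (z / S2)) (Real.sinh (z / S2) * (1 / S2)) z :=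
    (Real.hasDerivAt_cosh _).comp z h1
  have h3 : HasDerivAt (fun z : ℝ => S2 * Real.cosh (z / S2) ^ 2)
      (S2 * (2 * Real.cosh (z / S2) * (Real.sinh (z / S2) * (1 / S2)))) z := by
    have := (h2.pow 2).const_mul S2
    refine this.congr_deriv ?_
    ring
  have hne : S2 * Real.cosh (z / S2) ^ 2 ≠ 0 :=
    (mul_pos S2_pos (pow_pos (Real.cosh_pos _) 2)).ne'
  have h4 := h3.inv hne
  have he : Et = fun z => (S2 * Real.cosh (z / S2) ^ 2)⁻¹ := by
    funext t; rw [Et, one_div]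
  have h5 : HasDerivAt Et (-(S2 * (2 * Real.cosh (z / S2) * (Real.sinh (z / S2) * (1 / S2)))) /
      (S2 * Real.cosh (z / S2) ^ 2) ^ 2) z := by
    rw [he]; exact h4
  convert h5 using 1
  rw [Wt_eq]
  simp only [Et]
  have h2' : S2 ^ 2 = 2 := S2_sq
  have hcne := cosh_ne (z / S2)
  have hS := S2_ne
  field_simp
  linear_combination (-Real.sinh (z / S2)) * h2'


lemma cosh_lb (y : ℝ) : Real.exp |y| / 2 ≤ Real.cosh y := by
  rw [← Real.cosh_abs, Real.cosh_eq]
  have := (Real.exp_pos (-|y|)).le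
  linarith

lemma cosh_ub (y : ℝ) : Real.cosh y ≤ Real.exp |y| := by
  rw [← Real.cosh_abs, Real.cosh_eq]
  have := Real.exp_le_exp.2 (neg_le_self (abs_nonneg y))
  linarith

lemma Et_cont : Continuous Et := by
  apply continuous_const.div
  · fun_prop
  · exact fun z => (mul_pos S2_pos (pow_pos (Real.cosh_pos _) 2)).ne'

lemma exp_pow4 (z : ℝ) : Real.exp |z / S2| ^ 4 = Real.exp (2 * S2 * |z|) := by
  have h1 : |z / S2| = |z| / S2 := by rw [abs_div, abs_of_pos S2_pos]
  rw [h1, ← Real.exp_nat_mul]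
  congr 1
  have hS := S2_ne
  push_cast
  field_simp
  linear_combination (-2 : ℝ) * |z| * S2_sq

lemma Et_sq_eq (z : ℝ) : Et z ^ 2 = 1 / (2 * Real.cosh (z / S2) ^ 4) := by
  simp only [Et]
  rw [div_pow, one_pow, mul_pow, S2_sq]
  ring_nf

private lemma ub_trick {a b : ℝ} (ha : 0 < a) (hb : 0 < b) (h : b ≤ 16 * a) :
    1 / (2 * a) ≤ 8 * b⁻¹ := by
  have he : (8:ℝ) * b⁻¹ = 8 / b := by rw [inv_eq_one_div, mul_one_div]
  rw [he, div_le_div_iff₀ (by positivity) hb]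
  nlinarith

private lemma lb_trick {a b : ℝ} (ha : 0 < a) (hb : 0 < b) (h : a ≤ b) :
    b⁻¹ ≤ 2 * (1 / (2 * a)) := by
  have he : (2:ℝ) * (1 / (2 * a)) = 1 / a := by
    field_simp
  rw [he, inv_eq_one_div, div_le_div_iff₀ hb ha]
  nlinarith

lemma Et_sq_ub (z : ℝ) : Et z ^ 2 ≤ 8 * Real.exp (-(2 * S2 * |z|)) := by
  have h4 : (Real.exp |z / S2| / 2) ^ 4 ≤ Real.cosh (z / S2) ^ 4 :=
    pow_le_pow_left₀ (by positivity) (cosh_lb _) 4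
  have hA : (0:ℝ) < Real.exp |z / S2| ^ 4 := by positivity
  have hc : (0:ℝ) < Real.cosh (z / S2) ^ 4 := by positivity
  rw [Et_sq_eq, Real.exp_neg, ← exp_pow4 z]
  exact ub_trick hc hA (by nlinarith [h4])

lemma Et_sq_lb (z : ℝ) : Real.exp (-(2 * S2 * |z|)) ≤ 2 * Et z ^ 2 := by
  have h4 : Real.cosh (z / S2) ^ 4 ≤ Real.exp |z / S2| ^ 4 :=
    pow_le_pow_left₀ (Real.cosh_pos _).le (cosh_ub _) 4
  have hA : (0:ℝ) < Real.exp |z / S2| ^ 4 := by positivity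
  have hc : (0:ℝ) < Real.cosh (z / S2) ^ 4 := by positivity
  rw [Et_sq_eq, Real.exp_neg, ← exp_pow4 z]
  exact lb_trick hc hA h4

private lemma inv_trick {a b k : ℝ} (ha : 0 < a) (hb : 0 < b) (hk : 0 < k)
    (h : a ≤ k * b) : b⁻¹ ≤ k * a⁻¹ := by
  rw [inv_eq_one_div, inv_eq_one_div, mul_one_div, div_le_div_iff₀ hb ha]
  nlinarith

lemma Et_inv_ub (z : ℝ) : (Et z ^ 2)⁻¹ ≤ 2 * Real.exp (2 * S2 * |z|) := by
  have h := Et_sq_lb z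
  have h2 : Real.exp (2 * S2 * |z|) = (Real.exp (-(2 * S2 * |z|)))⁻¹ := by
    rw [Real.exp_neg, inv_inv]
  rw [h2]
  exact inv_trick (Real.exp_pos _) (pow_pos (Et_pos z) 2) two_pos h

lemma exp_le_Et_inv (z : ℝ) : Real.exp (2 * S2 * |z|) ≤ 8 * (Et z ^ 2)⁻¹ := by
  have h := Et_sq_ub z
  have h2 : Real.exp (2 * S2 * |z|) = (Real.exp (-(2 * S2 * |z|)))⁻¹ := by
    rw [Real.exp_neg, inv_inv]
  rw [h2]
  exact inv_trick (pow_pos (Et_pos z) 2) (Real.exp_pos _) (by norm_num) h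

lemma twoS2_pos : (0:ℝ) < 2 * S2 := by nlinarith [S2_pos]

lemma exp_int (c x : ℝ) (hc : 0 < c) :
    IntegrableOn (fun t => Real.exp (-(c * t))) (Ioi x) := by
  have := exp_neg_integrableOn_Ioi x hc
  simpa [neg_mul] using this

lemma exp_tail_val (c x : ℝ) (hc : 0 < c) :
    ∫ t in Ioi x, Real.exp (-(c * t)) = Real.exp (-(c * x)) / c := by
  have hder : ∀ t ∈ Ici x, HasDerivAt (fun s => -(Real.exp (-(c * s)) / c))
      (Real.exp (-(c * t))) t := by
    intro t _
    have h1 : HasDerivAt (fun s : ℝ => -(c * s)) (-c) t := by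
      exact (((hasDerivAt_id t).const_mul c).neg).congr_deriv (by simp)
    have h2 := (Real.hasDerivAt_exp _).comp t h1
    have h3 := (h2.div_const c).neg
    refine h3.congr_deriv ?_
    rw [mul_neg, neg_div, neg_neg, mul_div_assoc, div_self hc.ne', mul_one]
  have h1 : Tendsto (fun s : ℝ => -(c * s)) atTop atBot := by
    have h := tendsto_id.const_mul_atTop hc
    exact tendsto_neg_atTop_atBot.comp h
  have h2 := Real.tendsto_exp_atBot.comp h1
  have htend : Tendsto (fun s => -(Real.exp (-(c * s)) / c)) atTop (𝓝 0) := by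
    have := (h2.div_const c).neg
    simpa using this
  have := integral_Ioi_of_hasDerivAt_of_tendsto' hder (exp_int c x hc) htend
  rw [this]
  ring

lemma Et_sq_intOn (x : ℝ) (hx : 0 ≤ x) : IntegrableOn (fun t => Et t ^ 2) (Ioi x) := by
  apply Integrable.mono' ((exp_int (2 * S2) x twoS2_pos).const_mul 8)
  · exact ((Et_cont.pow 2).aestronglyMeasurable).restrict
  · filter_upwards [ae_restrict_mem measurableSet_Ioi] with t ht
    have ht' : (0:ℝ) ≤ t := le_trans hx (le_of_lt ht)
    have := Et_sq_ub t
    rw [abs_of_nonneg ht'] at this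
    rw [Real.norm_eq_abs, abs_of_nonneg (sq_nonneg _)]
    simpa using this

lemma Et_sq_tail (x : ℝ) (hx : 0 ≤ x) : ∫ t in Ioi x, Et t ^ 2 ≤ 6 * Et x ^ 2 := by
  have h1 : ∫ t in Ioi x, Et t ^ 2 ≤ ∫ t in Ioi x, 8 * Real.exp (-(2 * S2 * t)) := by
    apply setIntegral_mono_on (Et_sq_intOn x hx)
      ((exp_int (2 * S2) x twoS2_pos).const_mul 8) measurableSet_Ioi
    intro t ht
    have ht' : (0:ℝ) ≤ t := le_trans hx (le_of_lt ht)
    have := Et_sq_ub t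
    rwa [abs_of_nonneg ht'] at this
  have h2 : ∫ t in Ioi x, 8 * Real.exp (-(2 * S2 * t))
      = 8 * (Real.exp (-(2 * S2 * x)) / (2 * S2)) := by
    rw [MeasureTheory.integral_const_mul, exp_tail_val _ _ twoS2_pos]
  have h3 := Et_sq_lb x
  rw [abs_of_nonneg hx] at h3
  have := S2_sq; have := S2_pos; have := S2_le
  have hEp := pow_pos (Et_pos x) 2
  have h9 : (4:ℝ)/3 ≤ S2 := by nlinarith [S2_sq, S2_pos]
  calc ∫ t in Ioi x, Et t ^ 2 ≤ 8 * (Real.exp (-(2 * S2 * x)) / (2 * S2)) := by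
        rw [← h2]; exact h1
    _ = 4 * Real.exp (-(2 * S2 * x)) / S2 := by
        field_simp
        ring
    _ ≤ 6 * Et x ^ 2 := by
        rw [div_le_iff₀ S2_pos]
        nlinarith [h3, hEp, h9]

lemma reflect_intOn {f : ℝ → ℝ} {c : ℝ} (h : IntegrableOn f (Ioi (-c))) :
    IntegrableOn (fun t => f (-t)) (Iic c) := by
  have A : MeasurableEmbedding fun x : ℝ => -x :=
    (Homeomorph.neg ℝ).isClosedEmbedding.measurableEmbedding
  have hmap : (volume.restrict (Ioi (-c))).map Neg.neg = volume.restrict (Iio c) := by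
    conv_rhs => rw [← Measure.map_neg_eq_self (volume : Measure ℝ)]
    rw [A.restrict_map]
    congr 1
    ext x
    simp [neg_lt]
  have h2 : IntegrableOn (fun t => f (-t)) (Iio c) := by
    rw [IntegrableOn, ← hmap, A.integrable_map_iff]
    simp only [Function.comp_def, neg_neg]
    exact h
  rw [IntegrableOn, Measure.restrict_congr_set Iio_ae_eq_Iic.symm]
  exact h2

lemma Et_even (z : ℝ) : Et (-z) = Et z := by
  simp only [Et]
  rw [neg_div, Real.cosh_neg]

lemma Et_sq_intOn' (x : ℝ) (hx : x ≤ 0) : IntegrableOn (fun t => Et t ^ 2) (Iic x) := by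
  have h := reflect_intOn (f := fun t => Et t ^ 2) (c := x) (Et_sq_intOn (-x) (by linarith))
  have he : (fun t => Et (-t) ^ 2) = fun t => Et t ^ 2 := by
    funext t; rw [Et_even]
  rwa [he] at h

lemma Et_sq_tail' (x : ℝ) (hx : x ≤ 0) : ∫ t in Iic x, Et t ^ 2 ≤ 6 * Et x ^ 2 := by
  have h := integral_comp_neg_Iic x (fun t => Et t ^ 2)
  have he : (fun t : ℝ => Et (-t) ^ 2) = fun t => Et t ^ 2 := by
    funext t; rw [Et_even]
  rw [he] at h
  rw [h]
  have := Et_sq_tail (-x) (by linarith)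
  rwa [Et_even] at this

lemma Et_sq_integrable : Integrable (fun t => Et t ^ 2) := by
  rw [← integrableOn_univ, ← Set.Iic_union_Ioi (a := (0:ℝ))]
  exact (Et_sq_intOn' 0 le_rfl).union (Et_sq_intOn 0 le_rfl)

lemma Et_memL2 : MemLp Et 2 (volume : Measure ℝ) := by
  rw [memLp_two_iff_integrable_sq Et_cont.aestronglyMeasurable]
  exact Et_sq_integrable
lemma interval_exp (c : ℝ) (hc : c ≠ 0) (u v : ℝ) :
    ∫ t in u..v, Real.exp (c * t) = (Real.exp (c * v) - Real.exp (c * u)) / c := by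
  have hder : ∀ t ∈ Set.uIcc u v,
      HasDerivAt (fun s => Real.exp (c * s) / c) (Real.exp (c * t)) t := by
    intro t _
    have h1 : HasDerivAt (fun s : ℝ => c * s) c t := by
      simpa using (hasDerivAt_id t).const_mul c
    have h2 := ((Real.hasDerivAt_exp _).comp t h1).div_const c
    refine h2.congr_deriv ?_
    rw [mul_div_assoc, div_self hc, mul_one]
  rw [intervalIntegral.integral_eq_sub_of_hasDerivAt hder
    ((Real.continuous_exp.comp (continuous_const.mul continuous_id)).intervalIntegrable u v)]
  ring

lemma Winv_cont : Continuous (fun t => (Et t ^ 2)⁻¹) :=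
  (Et_cont.pow 2).inv₀ (fun t => (pow_pos (Et_pos t) 2).ne')

def Tt (x : ℝ) : ℝ := ∫ t in (0:ℝ)..x, (Et t ^ 2)⁻¹

lemma Tt_deriv (x : ℝ) : HasDerivAt Tt ((Et x ^ 2)⁻¹) x :=
  intervalIntegral.integral_hasDerivAt_right (Winv_cont.intervalIntegrable _ _)
    (Winv_cont.stronglyMeasurableAtFilter _ _) Winv_cont.continuousAt

lemma Tt_cont : Continuous Tt :=
  continuous_iff_continuousAt.2 fun x => (Tt_deriv x).continuousAt

lemma Tt_zero : Tt 0 = 0 := intervalIntegral.integral_same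

lemma Tt_nonneg (x : ℝ) (hx : 0 ≤ x) : 0 ≤ Tt x :=
  intervalIntegral.integral_nonneg hx (fun t _ => by positivity)

lemma Tt_nonpos (x : ℝ) (hx : x ≤ 0) : Tt x ≤ 0 := by
  rw [Tt, intervalIntegral.integral_symm]
  have : 0 ≤ ∫ t in x..(0:ℝ), (Et t ^ 2)⁻¹ :=
    intervalIntegral.integral_nonneg hx (fun t _ => by positivity)
  linarith

lemma Tt_abs_le (x : ℝ) : |Tt x| ≤ 6 * (Et x ^ 2)⁻¹ := by
  have h9 : (4:ℝ)/3 ≤ S2 := by nlinarith [S2_sq, S2_pos]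
  have hEI : (0:ℝ) < (Et x ^ 2)⁻¹ := by
    have := pow_pos (Et_pos x) 2; positivity
  rcases le_total 0 x with hx | hx
  · rw [abs_of_nonneg (Tt_nonneg x hx)]
    have hcont2 : Continuous (fun t : ℝ => 2 * Real.exp ((2 * S2) * t)) := by
      fun_prop
    have h1 : Tt x ≤ ∫ t in (0:ℝ)..x, 2 * Real.exp ((2 * S2) * t) := by
      apply intervalIntegral.integral_mono_on hx (Winv_cont.intervalIntegrable _ _)
        (hcont2.intervalIntegrable _ _)
      intro t ht
      have ht0 : (0:ℝ) ≤ t := ht.1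
      have := Et_inv_ub t
      rwa [abs_of_nonneg ht0] at this
    have h2 : ∫ t in (0:ℝ)..x, 2 * Real.exp ((2 * S2) * t)
        = 2 * ((Real.exp ((2 * S2) * x) - 1) / (2 * S2)) := by
      rw [intervalIntegral.integral_const_mul, interval_exp _ (ne_of_gt twoS2_pos)]
      norm_num
    have h3 := exp_le_Et_inv x
    rw [abs_of_nonneg hx] at h3
    have hex : (0:ℝ) < Real.exp (2 * S2 * x) := Real.exp_pos _
    calc Tt x ≤ 2 * ((Real.exp ((2 * S2) * x) - 1) / (2 * S2)) := by rw [← h2]; exact h1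
      _ = (Real.exp (2 * S2 * x) - 1) / S2 := by field_simp
      _ ≤ 6 * (Et x ^ 2)⁻¹ := by
          rw [div_le_iff₀ S2_pos]
          nlinarith [h3, hEI, h9, S2_pos]
  · rw [abs_of_nonpos (Tt_nonpos x hx)]
    have hsymm : -Tt x = ∫ t in x..(0:ℝ), (Et t ^ 2)⁻¹ := by
      rw [Tt, intervalIntegral.integral_symm, neg_neg]
    rw [hsymm]
    have hcont2 : Continuous (fun t : ℝ => 2 * Real.exp ((-(2 * S2)) * t)) := by
      fun_prop
    have h1 : ∫ t in x..(0:ℝ), (Et t ^ 2)⁻¹ ≤ ∫ t in x..(0:ℝ), 2 * Real.exp ((-(2 * S2)) * t) := by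
      apply intervalIntegral.integral_mono_on hx (Winv_cont.intervalIntegrable _ _)
        (hcont2.intervalIntegrable _ _)
      intro t ht
      have ht0 : t ≤ (0:ℝ) := ht.2
      have := Et_inv_ub t
      rw [abs_of_nonpos ht0] at this
      rw [show ((-(2 * S2)) * t) = 2 * S2 * (-t) from by ring]
      exact this
    have h2 : ∫ t in x..(0:ℝ), 2 * Real.exp ((-(2 * S2)) * t)
        = 2 * ((1 - Real.exp ((-(2 * S2)) * x)) / (-(2 * S2))) := by
      rw [intervalIntegral.integral_const_mul, interval_exp _ (by nlinarith [twoS2_pos] : (-(2*S2) : ℝ) ≠ 0)]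
      norm_num
    have h3 := exp_le_Et_inv x
    rw [abs_of_nonpos hx] at h3
    have hrw : (-(2 * S2)) * x = 2 * S2 * -x := by ring
    rw [hrw] at h2
    have hex : (0:ℝ) < Real.exp (2 * S2 * -x) := Real.exp_pos _
    calc ∫ t in x..(0:ℝ), (Et t ^ 2)⁻¹
        ≤ 2 * ((1 - Real.exp (2 * S2 * -x)) / (-(2 * S2))) := by
          rw [← h2]; exact h1
      _ = (Real.exp (2 * S2 * -x) - 1) / S2 := by
          have hS := S2_ne
          rw [div_neg]
          field_simp
          ring
      _ ≤ 6 * (Et x ^ 2)⁻¹ := by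
          rw [div_le_iff₀ S2_pos]
          nlinarith [h3, hEI, h9, S2_pos]

lemma CS (μ : Measure ℝ) (f g : ℝ → ℝ) (hf : MemLp f 2 μ) (hg : MemLp g 2 μ) :
    ∫ x, |f x| * |g x| ∂μ ≤ Real.sqrt (∫ x, f x ^ 2 ∂μ) * Real.sqrt (∫ x, g x ^ 2 ∂μ) := by
  have hpq : Real.HolderConjugate 2 2 := Real.HolderConjugate.two_two
  have h2 : (ENNReal.ofReal (2:ℝ)) = 2 := by
    rw [ENNReal.ofReal_ofNat]
  have hfa : MemLp (fun x => |f x|) (ENNReal.ofReal (2:ℝ)) μ := by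
    rw [h2]; simpa [Real.norm_eq_abs] using hf.norm
  have hga : MemLp (fun x => |g x|) (ENNReal.ofReal (2:ℝ)) μ := by
    rw [h2]; simpa [Real.norm_eq_abs] using hg.norm
  have h := integral_mul_le_Lp_mul_Lq_of_nonneg hpq
    (ae_of_all _ fun x => abs_nonneg (f x)) (ae_of_all _ fun x => abs_nonneg (g x)) hfa hga
  have hrw : ∀ (u : ℝ → ℝ), (fun x => |u x| ^ (2:ℝ)) = fun x => u x ^ 2 := by
    intro u; funext x
    rw [show (2:ℝ) = ((2:ℕ):ℝ) by norm_num, Real.rpow_natCast, sq_abs]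
  simp only [hrw] at h
  have hs : ∀ (u : ℝ → ℝ), (∫ x, u x ^ 2 ∂μ) ^ (1/(2:ℝ)) = Real.sqrt (∫ x, u x ^ 2 ∂μ) := by
    intro u
    rw [Real.sqrt_eq_rpow]
  rw [hs f, hs g] at h
  exact h
lemma Wt_cont : Continuous Wt :=
  continuous_iff_continuousAt.2 fun x => (hW x).continuousAt

lemma L2mul {f h : ℝ → ℝ} {μ : Measure ℝ} (hf : MemLp f 2 μ) (hh : MemLp h 2 μ) :
    Integrable (fun t => f t * h t) μ := by
  have h1 := hf.integrable_sq
  have h2 := hh.integrable_sq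
  apply Integrable.mono' ((h1.add h2).div_const 2)
    (hf.aestronglyMeasurable.mul hh.aestronglyMeasurable)
  refine ae_of_all _ fun t => ?_
  simp only [Pi.add_apply, Pi.mul_apply, Real.norm_eq_abs, abs_mul]
  nlinarith [sq_nonneg (|f t| - |h t|), sq_abs (f t), sq_abs (h t),
    abs_nonneg (f t), abs_nonneg (h t)]

section PSI

variable (ψ : ℝ → ℝ)

def gg (x : ℝ) : ℝ := ∫ t in Iic x, ψ t * Et t
def kk (x : ℝ) : ℝ := gg ψ x / Et x
def phiF (x : ℝ) : ℝ := deriv ψ x + S2 * Wt x * ψ x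

variable {ψ}

structure Hyp (ψ : ℝ → ℝ) : Prop where
  hd : Differentiable ℝ ψ
  hL2 : MemLp ψ 2 (volume : Measure ℝ)
  hL2' : MemLp (deriv ψ) 2 (volume : Measure ℝ)
  horto : ∫ t, ψ t * Et t = 0

lemma psiE_int (h : Hyp ψ) : Integrable (fun t => ψ t * Et t) := L2mul h.hL2 Et_memL2

lemma psi_sq_int (h : Hyp ψ) : Integrable (fun t => ψ t ^ 2) := h.hL2.integrable_sq

lemma Np_nonneg (h : Hyp ψ) : 0 ≤ ∫ t, ψ t ^ 2 :=
  integral_nonneg fun t => sq_nonneg _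

lemma gg_hasDeriv (h : Hyp ψ) (x : ℝ) : HasDerivAt (gg ψ) (ψ x * Et x) x := by
  have hint := psiE_int h
  have he : gg ψ = fun x => (∫ t in Iic 0, ψ t * Et t) + ∫ t in (0:ℝ)..x, ψ t * Et t := by
    funext y
    have h0 := intervalIntegral.integral_Iic_sub_Iic (hint.integrableOn (s := Iic 0))
      (hint.integrableOn (s := Iic y))
    simp only [gg]
    linarith [h0]
  have hc : Continuous fun t => ψ t * Et t := h.hd.continuous.mul Et_cont
  rw [he]
  exact (intervalIntegral.integral_hasDerivAt_right (hc.intervalIntegrable _ _)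
    (hc.stronglyMeasurableAtFilter _ _) hc.continuousAt).const_add _

lemma gg_cont (h : Hyp ψ) : Continuous (gg ψ) :=
  continuous_iff_continuousAt.2 fun x => (gg_hasDeriv h x).continuousAt

lemma abs_setInt_le (s : Set ℝ) (hf : MemLp ψ 2 (volume : Measure ℝ)) :
    |∫ t in s, ψ t * Et t| ≤
      Real.sqrt (∫ t in s, ψ t ^ 2) * Real.sqrt (∫ t in s, Et t ^ 2) := by
  have h1 : |∫ t in s, ψ t * Et t| ≤ ∫ t in s, |ψ t| * |Et t| := by
    have := norm_integral_le_integral_norm (μ := (volume : Measure ℝ).restrict s)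
      (f := fun t => ψ t * Et t)
    simpa [Real.norm_eq_abs, abs_mul] using this
  exact h1.trans (CS _ _ _ (hf.restrict _) (Et_memL2.restrict _))

lemma gg_sq_top (h : Hyp ψ) (x : ℝ) (hx : 0 ≤ x) :
    gg ψ x ^ 2 ≤ (∫ t, ψ t ^ 2) * (6 * Et x ^ 2) := by
  have hint := psiE_int h
  have hsplit := intervalIntegral.integral_Iic_add_Ioi (hint.integrableOn (s := Iic x))
    (hint.integrableOn (s := Ioi x))
  rw [h.horto] at hsplit
  have hgg : gg ψ x = -∫ t in Ioi x, ψ t * Et t := by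
    simp only [gg]; linarith [hsplit]
  have habs : |gg ψ x| ≤
      Real.sqrt (∫ t in Ioi x, ψ t ^ 2) * Real.sqrt (∫ t in Ioi x, Et t ^ 2) := by
    rw [hgg, abs_neg]
    exact abs_setInt_le _ h.hL2
  have h1 : ∫ t in Ioi x, ψ t ^ 2 ≤ ∫ t, ψ t ^ 2 :=
    setIntegral_le_integral (psi_sq_int h) (ae_of_all _ fun t => sq_nonneg _)
  have h2 : ∫ t in Ioi x, Et t ^ 2 ≤ 6 * Et x ^ 2 := Et_sq_tail x hx
  have hnn1 : 0 ≤ ∫ t in Ioi x, ψ t ^ 2 := integral_nonneg fun t => sq_nonneg _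
  have hnn2 : 0 ≤ ∫ t in Ioi x, Et t ^ 2 := integral_nonneg fun t => sq_nonneg _
  have hsq : gg ψ x ^ 2 ≤ (Real.sqrt (∫ t in Ioi x, ψ t ^ 2) *
      Real.sqrt (∫ t in Ioi x, Et t ^ 2)) ^ 2 := by
    rw [← sq_abs]
    exact pow_le_pow_left₀ (abs_nonneg _) habs 2
  calc gg ψ x ^ 2 ≤ (Real.sqrt (∫ t in Ioi x, ψ t ^ 2) *
      Real.sqrt (∫ t in Ioi x, Et t ^ 2)) ^ 2 := hsq
    _ = (∫ t in Ioi x, ψ t ^ 2) * (∫ t in Ioi x, Et t ^ 2) := by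
        rw [mul_pow, Real.sq_sqrt hnn1, Real.sq_sqrt hnn2]
    _ ≤ (∫ t, ψ t ^ 2) * (6 * Et x ^ 2) := by
        apply mul_le_mul h1 h2 hnn2 (Np_nonneg h)

lemma gg_sq_bot (h : Hyp ψ) (x : ℝ) (hx : x ≤ 0) :
    gg ψ x ^ 2 ≤ (∫ t, ψ t ^ 2) * (6 * Et x ^ 2) := by
  have habs : |gg ψ x| ≤
      Real.sqrt (∫ t in Iic x, ψ t ^ 2) * Real.sqrt (∫ t in Iic x, Et t ^ 2) :=
    abs_setInt_le _ h.hL2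
  have h1 : ∫ t in Iic x, ψ t ^ 2 ≤ ∫ t, ψ t ^ 2 :=
    setIntegral_le_integral (psi_sq_int h) (ae_of_all _ fun t => sq_nonneg _)
  have h2 : ∫ t in Iic x, Et t ^ 2 ≤ 6 * Et x ^ 2 := Et_sq_tail' x hx
  have hnn1 : 0 ≤ ∫ t in Iic x, ψ t ^ 2 := integral_nonneg fun t => sq_nonneg _
  have hnn2 : 0 ≤ ∫ t in Iic x, Et t ^ 2 := integral_nonneg fun t => sq_nonneg _
  have hsq : gg ψ x ^ 2 ≤ (Real.sqrt (∫ t in Iic x, ψ t ^ 2) *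
      Real.sqrt (∫ t in Iic x, Et t ^ 2)) ^ 2 := by
    rw [← sq_abs]
    exact pow_le_pow_left₀ (abs_nonneg _) habs 2
  calc gg ψ x ^ 2 ≤ (Real.sqrt (∫ t in Iic x, ψ t ^ 2) *
      Real.sqrt (∫ t in Iic x, Et t ^ 2)) ^ 2 := hsq
    _ = (∫ t in Iic x, ψ t ^ 2) * (∫ t in Iic x, Et t ^ 2) := by
        rw [mul_pow, Real.sq_sqrt hnn1, Real.sq_sqrt hnn2]
    _ ≤ (∫ t, ψ t ^ 2) * (6 * Et x ^ 2) := by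
        apply mul_le_mul h1 h2 hnn2 (Np_nonneg h)

lemma kk_hasDeriv (h : Hyp ψ) (x : ℝ) :
    HasDerivAt (kk ψ) (ψ x + S2 * Wt x * kk ψ x) x := by
  have h1 := (gg_hasDeriv h x).div (hE x) (Et_pos x).ne'
  have he : kk ψ = fun y => gg ψ y / Et y := by funext y; rw [kk]
  rw [he]
  refine h1.congr_deriv ?_
  simp only [kk]
  have hne := (Et_pos x).ne'
  field_simp
  ring

lemma kk_cont (h : Hyp ψ) : Continuous (kk ψ) :=
  (gg_cont h).div Et_cont fun x => (Et_pos x).ne'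

lemma kk_sq_eq (x : ℝ) : kk ψ x ^ 2 = gg ψ x ^ 2 * (Et x ^ 2)⁻¹ := by
  rw [kk, div_pow, div_eq_mul_inv]

lemma gg_eq_kkEt (x : ℝ) : gg ψ x = kk ψ x * Et x := by
  rw [kk, div_mul_cancel₀ _ (Et_pos x).ne']

lemma F_hasDeriv (h : Hyp ψ) (x : ℝ) :
    HasDerivAt (fun y => gg ψ y ^ 2 * Tt y)
      (2 * gg ψ x * (ψ x * Et x) * Tt x + gg ψ x ^ 2 * (Et x ^ 2)⁻¹) x := by
  have := ((gg_hasDeriv h x).pow 2).mul (Tt_deriv x)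
  refine this.congr_deriv ?_
  push_cast
  simp only [Pi.pow_apply]
  ring

lemma EtTt_abs (x : ℝ) : |Et x ^ 2 * Tt x| ≤ 6 := by
  have h1 := Tt_abs_le x
  have h2 : (0:ℝ) < Et x ^ 2 := pow_pos (Et_pos x) 2
  rw [abs_mul, abs_of_nonneg h2.le]
  calc Et x ^ 2 * |Tt x| ≤ Et x ^ 2 * (6 * (Et x ^ 2)⁻¹) :=
        mul_le_mul_of_nonneg_left h1 h2.le
    _ = 6 := by rw [mul_left_comm, mul_inv_cancel₀ h2.ne', mul_one]

lemma hardy_interval_pos (h : Hyp ψ) (R : ℝ) (hR : 0 ≤ R) :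
    ∫ t in (0:ℝ)..R, kk ψ t ^ 2 ≤ 216 * ∫ t, ψ t ^ 2 := by
  set Np := ∫ t, ψ t ^ 2 with hNp
  have hNp0 := Np_nonneg h
  set B := Real.sqrt Np with hB
  have hB2 : B ^ 2 = Np := Real.sq_sqrt hNp0
  have hcK : Continuous fun t => kk ψ t ^ 2 := (kk_cont h).pow 2
  have hcI : Continuous fun t => 2 * gg ψ t * (ψ t * Et t) * Tt t :=
    (((continuous_const.mul (gg_cont h)).mul
      (h.hd.continuous.mul Et_cont)).mul Tt_cont)
  have hcF' : Continuous fun t => 2 * gg ψ t * (ψ t * Et t) * Tt t + gg ψ t ^ 2 * (Et t ^ 2)⁻¹ :=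
    hcI.add (((gg_cont h).pow 2).mul Winv_cont)
  have hFTC := intervalIntegral.integral_eq_sub_of_hasDerivAt
    (f := fun y => gg ψ y ^ 2 * Tt y) (a := 0) (b := R)
    (fun t _ => F_hasDeriv h t) (hcF'.intervalIntegrable 0 R)
  have hadd : ∫ t in (0:ℝ)..R, (2 * gg ψ t * (ψ t * Et t) * Tt t + gg ψ t ^ 2 * (Et t ^ 2)⁻¹)
      = (∫ t in (0:ℝ)..R, 2 * gg ψ t * (ψ t * Et t) * Tt t)
        + ∫ t in (0:ℝ)..R, gg ψ t ^ 2 * (Et t ^ 2)⁻¹ :=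
    intervalIntegral.integral_add (hcI.intervalIntegrable _ _)
      ((((gg_cont h).pow 2).mul Winv_cont).intervalIntegrable _ _)
  have hkk_eq : ∫ t in (0:ℝ)..R, kk ψ t ^ 2 = ∫ t in (0:ℝ)..R, gg ψ t ^ 2 * (Et t ^ 2)⁻¹ := by
    apply intervalIntegral.integral_congr
    intro t _
    exact kk_sq_eq t
  have hsplit : ∫ t in (0:ℝ)..R, kk ψ t ^ 2
      = gg ψ R ^ 2 * Tt R - ∫ t in (0:ℝ)..R, 2 * gg ψ t * (ψ t * Et t) * Tt t := by
    rw [hkk_eq]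
    rw [hadd] at hFTC
    simp only [Tt_zero, mul_zero, sub_zero] at hFTC
    linarith [hFTC]
  -- boundary bound
  have hbdry : gg ψ R ^ 2 * Tt R ≤ 36 * Np := by
    have h1 := gg_sq_top h R hR
    have h2 := Tt_abs_le R
    have h3 := Tt_nonneg R hR
    have hEp : (0:ℝ) < Et R ^ 2 := pow_pos (Et_pos R) 2
    have h4 : Tt R ≤ 6 * (Et R ^ 2)⁻¹ := by
      rw [abs_of_nonneg h3] at h2; exact h2
    calc gg ψ R ^ 2 * Tt R ≤ (Np * (6 * Et R ^ 2)) * (6 * (Et R ^ 2)⁻¹) := by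
          apply mul_le_mul h1 h4 h3 (by positivity)
      _ = 36 * Np := by rw [show (Np * (6 * Et R ^ 2)) * (6 * (Et R ^ 2)⁻¹) = 36 * Np * (Et R ^ 2 * (Et R ^ 2)⁻¹) by ring, mul_inv_cancel₀ hEp.ne', mul_one]
  -- cross term bound
  set S := ∫ t in (0:ℝ)..R, kk ψ t ^ 2 with hS
  have hSnn : 0 ≤ S := intervalIntegral.integral_nonneg hR fun t _ => sq_nonneg _
  have hS2 : Real.sqrt S ^ 2 = S := Real.sq_sqrt hSnn
  have hpt : ∀ t, |2 * gg ψ t * (ψ t * Et t) * Tt t| ≤ 12 * (|kk ψ t| * |ψ t|) := by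
    intro t
    have heq : 2 * gg ψ t * (ψ t * Et t) * Tt t
        = 2 * (kk ψ t * ψ t) * (Et t ^ 2 * Tt t) := by
      rw [gg_eq_kkEt]; ring
    rw [heq]
    have h6 := EtTt_abs t
    rw [abs_mul, abs_mul, abs_mul, abs_of_nonneg (by norm_num : (0:ℝ) ≤ 2)]
    have hnn : (0:ℝ) ≤ 2 * (|kk ψ t| * |ψ t|) := by positivity
    calc 2 * (|kk ψ t| * |ψ t|) * |Et t ^ 2 * Tt t|
        ≤ 2 * (|kk ψ t| * |ψ t|) * 6 := mul_le_mul_of_nonneg_left h6 hnn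
      _ = 12 * (|kk ψ t| * |ψ t|) := by ring
  have hCS : ∫ t in Ioc (0:ℝ) R, |kk ψ t| * |ψ t| ≤ Real.sqrt S * B := by
    have hkmem : MemLp (kk ψ) 2 ((volume : Measure ℝ).restrict (Ioc 0 R)) := by
      rw [memLp_two_iff_integrable_sq ((kk_cont h).aestronglyMeasurable.restrict)]
      exact hcK.integrableOn_Ioc
    have hcs := CS _ _ _ hkmem (h.hL2.restrict _)
    apply hcs.trans
    have e1 : ∫ t in Ioc (0:ℝ) R, kk ψ t ^ 2 = S := by
      rw [hS, intervalIntegral.integral_of_le hR]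
    have e2 : Real.sqrt (∫ t in Ioc (0:ℝ) R, ψ t ^ 2) ≤ B := by
      apply Real.sqrt_le_sqrt
      exact setIntegral_le_integral (psi_sq_int h) (ae_of_all _ fun t => sq_nonneg _)
    rw [e1]
    exact mul_le_mul_of_nonneg_left e2 (Real.sqrt_nonneg _)
  have hcross : |∫ t in (0:ℝ)..R, 2 * gg ψ t * (ψ t * Et t) * Tt t|
      ≤ 12 * (Real.sqrt S * B) := by
    have habs := intervalIntegral.abs_integral_le_integral_abs (μ := volume)
      (f := fun t => 2 * gg ψ t * (ψ t * Et t) * Tt t) hR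
    apply habs.trans
    have hmono : ∫ t in (0:ℝ)..R, |2 * gg ψ t * (ψ t * Et t) * Tt t|
        ≤ ∫ t in (0:ℝ)..R, 12 * (|kk ψ t| * |ψ t|) := by
      apply intervalIntegral.integral_mono_on hR
        (hcI.abs.intervalIntegrable _ _)
        ((continuous_const.mul ((kk_cont h).abs.mul h.hd.continuous.abs)).intervalIntegrable _ _)
      intro t _
      exact hpt t
    apply hmono.trans
    rw [intervalIntegral.integral_const_mul, intervalIntegral.integral_of_le hR]
    exact mul_le_mul_of_nonneg_left hCS (by norm_num)
  have hfin : S ≤ 36 * Np + 12 * (Real.sqrt S * B) := by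
    have h1 := abs_le.1 hcross
    linarith [hbdry, hsplit, h1.1, h1.2]
  nlinarith [sq_nonneg (Real.sqrt S - 12 * B), hS2, hB2, Real.sqrt_nonneg S,
    Real.sqrt_nonneg Np, hfin]


lemma hardy_interval_neg (h : Hyp ψ) (L : ℝ) (hL : L ≤ 0) :
    ∫ t in L..(0:ℝ), kk ψ t ^ 2 ≤ 216 * ∫ t, ψ t ^ 2 := by
  set Np := ∫ t, ψ t ^ 2 with hNp
  have hNp0 := Np_nonneg h
  set B := Real.sqrt Np with hB
  have hB2 : B ^ 2 = Np := Real.sq_sqrt hNp0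
  have hcK : Continuous fun t => kk ψ t ^ 2 := (kk_cont h).pow 2
  have hcI : Continuous fun t => 2 * gg ψ t * (ψ t * Et t) * Tt t :=
    (((continuous_const.mul (gg_cont h)).mul
      (h.hd.continuous.mul Et_cont)).mul Tt_cont)
  have hcF' : Continuous fun t => 2 * gg ψ t * (ψ t * Et t) * Tt t + gg ψ t ^ 2 * (Et t ^ 2)⁻¹ :=
    hcI.add (((gg_cont h).pow 2).mul Winv_cont)
  have hFTC := intervalIntegral.integral_eq_sub_of_hasDerivAt
    (f := fun y => gg ψ y ^ 2 * Tt y) (a := L) (b := 0)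
    (fun t _ => F_hasDeriv h t) (hcF'.intervalIntegrable L 0)
  have hadd : ∫ t in L..(0:ℝ), (2 * gg ψ t * (ψ t * Et t) * Tt t + gg ψ t ^ 2 * (Et t ^ 2)⁻¹)
      = (∫ t in L..(0:ℝ), 2 * gg ψ t * (ψ t * Et t) * Tt t)
        + ∫ t in L..(0:ℝ), gg ψ t ^ 2 * (Et t ^ 2)⁻¹ :=
    intervalIntegral.integral_add (hcI.intervalIntegrable _ _)
      ((((gg_cont h).pow 2).mul Winv_cont).intervalIntegrable _ _)
  have hkk_eq : ∫ t in L..(0:ℝ), kk ψ t ^ 2 = ∫ t in L..(0:ℝ), gg ψ t ^ 2 * (Et t ^ 2)⁻¹ := by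
    apply intervalIntegral.integral_congr
    intro t _
    exact kk_sq_eq t
  have hsplit : ∫ t in L..(0:ℝ), kk ψ t ^ 2
      = -(gg ψ L ^ 2 * Tt L) - ∫ t in L..(0:ℝ), 2 * gg ψ t * (ψ t * Et t) * Tt t := by
    rw [hkk_eq]
    rw [hadd] at hFTC
    simp only [Tt_zero, mul_zero, zero_sub] at hFTC
    linarith [hFTC]
  have hbdry : -(gg ψ L ^ 2 * Tt L) ≤ 36 * Np := by
    have h1 := gg_sq_bot h L hL
    have h2 := Tt_abs_le L
    have h3 := Tt_nonpos L hL
    have hEp : (0:ℝ) < Et L ^ 2 := pow_pos (Et_pos L) 2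
    have h4 : -Tt L ≤ 6 * (Et L ^ 2)⁻¹ := by
      rw [abs_of_nonpos h3] at h2; exact h2
    calc -(gg ψ L ^ 2 * Tt L) = gg ψ L ^ 2 * (-Tt L) := by ring
      _ ≤ (Np * (6 * Et L ^ 2)) * (6 * (Et L ^ 2)⁻¹) := by
          apply mul_le_mul h1 h4 (by linarith) (by positivity)
      _ = 36 * Np := by rw [show (Np * (6 * Et L ^ 2)) * (6 * (Et L ^ 2)⁻¹) = 36 * Np * (Et L ^ 2 * (Et L ^ 2)⁻¹) by ring, mul_inv_cancel₀ hEp.ne', mul_one]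
  set S := ∫ t in L..(0:ℝ), kk ψ t ^ 2 with hS
  have hSnn : 0 ≤ S := intervalIntegral.integral_nonneg hL fun t _ => sq_nonneg _
  have hS2 : Real.sqrt S ^ 2 = S := Real.sq_sqrt hSnn
  have hpt : ∀ t, |2 * gg ψ t * (ψ t * Et t) * Tt t| ≤ 12 * (|kk ψ t| * |ψ t|) := by
    intro t
    have heq : 2 * gg ψ t * (ψ t * Et t) * Tt t
        = 2 * (kk ψ t * ψ t) * (Et t ^ 2 * Tt t) := by
      rw [gg_eq_kkEt]; ring
    rw [heq]
    have h6 := EtTt_abs t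
    rw [abs_mul, abs_mul, abs_mul, abs_of_nonneg (by norm_num : (0:ℝ) ≤ 2)]
    have hnn : (0:ℝ) ≤ 2 * (|kk ψ t| * |ψ t|) := by positivity
    calc 2 * (|kk ψ t| * |ψ t|) * |Et t ^ 2 * Tt t|
        ≤ 2 * (|kk ψ t| * |ψ t|) * 6 := mul_le_mul_of_nonneg_left h6 hnn
      _ = 12 * (|kk ψ t| * |ψ t|) := by ring
  have hCS : ∫ t in Ioc L (0:ℝ), |kk ψ t| * |ψ t| ≤ Real.sqrt S * B := by
    have hkmem : MemLp (kk ψ) 2 ((volume : Measure ℝ).restrict (Ioc L 0)) := by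
      rw [memLp_two_iff_integrable_sq ((kk_cont h).aestronglyMeasurable.restrict)]
      exact hcK.integrableOn_Ioc
    have hcs := CS _ _ _ hkmem (h.hL2.restrict _)
    apply hcs.trans
    have e1 : ∫ t in Ioc L (0:ℝ), kk ψ t ^ 2 = S := by
      rw [hS, intervalIntegral.integral_of_le hL]
    have e2 : Real.sqrt (∫ t in Ioc L (0:ℝ), ψ t ^ 2) ≤ B := by
      apply Real.sqrt_le_sqrt
      exact setIntegral_le_integral (psi_sq_int h) (ae_of_all _ fun t => sq_nonneg _)
    rw [e1]
    exact mul_le_mul_of_nonneg_left e2 (Real.sqrt_nonneg _)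
  have hcross : |∫ t in L..(0:ℝ), 2 * gg ψ t * (ψ t * Et t) * Tt t|
      ≤ 12 * (Real.sqrt S * B) := by
    have habs := intervalIntegral.abs_integral_le_integral_abs (μ := volume)
      (f := fun t => 2 * gg ψ t * (ψ t * Et t) * Tt t) hL
    apply habs.trans
    have hmono : ∫ t in L..(0:ℝ), |2 * gg ψ t * (ψ t * Et t) * Tt t|
        ≤ ∫ t in L..(0:ℝ), 12 * (|kk ψ t| * |ψ t|) := by
      apply intervalIntegral.integral_mono_on hL
        (hcI.abs.intervalIntegrable _ _)
        ((continuous_const.mul ((kk_cont h).abs.mul h.hd.continuous.abs)).intervalIntegrable _ _)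
      intro t _
      exact hpt t
    apply hmono.trans
    rw [intervalIntegral.integral_const_mul, intervalIntegral.integral_of_le hL]
    exact mul_le_mul_of_nonneg_left hCS (by norm_num)
  have hfin : S ≤ 36 * Np + 12 * (Real.sqrt S * B) := by
    have h1 := abs_le.1 hcross
    linarith [hbdry, hsplit, h1.1, h1.2]
  nlinarith [sq_nonneg (Real.sqrt S - 12 * B), hS2, hB2, Real.sqrt_nonneg S,
    Real.sqrt_nonneg Np, hfin]

lemma kk_sq_intOn_Ioi (h : Hyp ψ) : IntegrableOn (fun t => kk ψ t ^ 2) (Ioi 0) := by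
  apply integrableOn_Ioi_of_intervalIntegral_norm_bounded (216 * ∫ t, ψ t ^ 2) 0
    (fun i : ℝ => ((kk_cont h).pow 2).integrableOn_Ioc) tendsto_id
  filter_upwards [eventually_ge_atTop (0:ℝ)] with i hi
  have he : ∫ x in (0:ℝ)..(id i), ‖(kk ψ ^ 2) x‖ = ∫ x in (0:ℝ)..i, kk ψ x ^ 2 := by
    apply intervalIntegral.integral_congr
    intro t _
    exact norm_of_nonneg (sq_nonneg _)
  rw [he]
  exact hardy_interval_pos h i hi

lemma kk_sq_Ioi_le (h : Hyp ψ) : ∫ t in Ioi 0, kk ψ t ^ 2 ≤ 216 * ∫ t, ψ t ^ 2 := by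
  have htend := intervalIntegral_tendsto_integral_Ioi 0 (kk_sq_intOn_Ioi h) tendsto_id
  apply le_of_tendsto htend
  filter_upwards [eventually_ge_atTop (0:ℝ)] with i hi
  exact hardy_interval_pos h i hi

lemma kk_sq_intOn_Iic (h : Hyp ψ) : IntegrableOn (fun t => kk ψ t ^ 2) (Iic 0) := by
  apply integrableOn_Iic_of_intervalIntegral_norm_bounded (216 * ∫ t, ψ t ^ 2) 0
    (fun i : ℝ => ((kk_cont h).pow 2).integrableOn_Ioc) tendsto_id
  filter_upwards [eventually_le_atBot (0:ℝ)] with i hi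
  have he : ∫ x in (id i)..(0:ℝ), ‖(kk ψ ^ 2) x‖ = ∫ x in i..(0:ℝ), kk ψ x ^ 2 := by
    apply intervalIntegral.integral_congr
    intro t _
    exact norm_of_nonneg (sq_nonneg _)
  rw [he]
  exact hardy_interval_neg h i hi

lemma kk_sq_Iic_le (h : Hyp ψ) : ∫ t in Iic 0, kk ψ t ^ 2 ≤ 216 * ∫ t, ψ t ^ 2 := by
  have htend := intervalIntegral_tendsto_integral_Iic 0 (kk_sq_intOn_Iic h) tendsto_id
  apply le_of_tendsto htend
  filter_upwards [eventually_le_atBot (0:ℝ)] with i hi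
  exact hardy_interval_neg h i hi

lemma kk_sq_integrable (h : Hyp ψ) : Integrable (fun t => kk ψ t ^ 2) := by
  rw [← integrableOn_univ, ← Set.Iic_union_Ioi (a := (0:ℝ))]
  exact (kk_sq_intOn_Iic h).union (kk_sq_intOn_Ioi h)

lemma kk_memL2 (h : Hyp ψ) : MemLp (kk ψ) 2 (volume : Measure ℝ) := by
  rw [memLp_two_iff_integrable_sq ((kk_cont h).aestronglyMeasurable)]
  exact kk_sq_integrable h

lemma kk_sq_total (h : Hyp ψ) : ∫ t, kk ψ t ^ 2 ≤ 432 * ∫ t, ψ t ^ 2 := by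
  have := intervalIntegral.integral_Iic_add_Ioi (b := (0:ℝ))
    (kk_sq_intOn_Iic h) (kk_sq_intOn_Ioi h)
  have h1 := kk_sq_Iic_le h
  have h2 := kk_sq_Ioi_le h
  linarith [this]
lemma oneWt_int (h : Hyp ψ) : Integrable (fun t => (1 - 3 * Wt t ^ 2) * ψ t ^ 2) := by
  apply Integrable.mono' ((psi_sq_int h).const_mul 2)
    (((continuous_const.sub ((continuous_const.mul (Wt_cont.pow 2)))).mul
      ((h.hd.continuous.pow 2))).aestronglyMeasurable)
  refine ae_of_all _ fun t => ?_
  simp only [Pi.mul_apply, Pi.sub_apply, Pi.pow_apply]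
  rw [Real.norm_eq_abs, abs_mul, abs_of_nonneg (sq_nonneg (ψ t))]
  have h1 := Wt_sq_le t
  have h2 := sq_nonneg (Wt t)
  have h3 : |1 - 3 * Wt t ^ 2| ≤ 2 := abs_le.2 ⟨by linarith, by linarith⟩
  nlinarith [sq_nonneg (ψ t)]

lemma Qf_int (h : Hyp ψ) :
    Integrable (fun t => (deriv ψ t) ^ 2 - (1 - 3 * (Wt t) ^ 2) * (ψ t) ^ 2) :=
  h.hL2'.integrable_sq.sub (oneWt_int h)

lemma Gd_int (h : Hyp ψ) :
    Integrable (fun t => S2 * Et t * ψ t ^ 2 + S2 * Wt t * (2 * ψ t * deriv ψ t)) := by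
  have hWabs : ∀ t, |Wt t| ≤ 1 := fun t => abs_le.2
    ⟨by nlinarith [Wt_sq_le t, sq_nonneg (Wt t)], by nlinarith [Wt_sq_le t, sq_nonneg (Wt t)]⟩
  have h1 : Integrable (fun t => S2 * Et t * ψ t ^ 2) := by
    refine Integrable.mono' (psi_sq_int h) ?_ (ae_of_all _ fun t => ?_)
    · exact ((continuous_const.mul Et_cont).mul (h.hd.continuous.pow 2)).aestronglyMeasurable
    · rw [Real.norm_eq_abs, abs_mul, abs_of_nonneg (sq_nonneg (ψ t)),
        abs_of_nonneg (mul_pos S2_pos (Et_pos t)).le]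
      nlinarith [S2Et_le_one t, sq_nonneg (ψ t), S2_pos, Et_pos t]
  have h2 : Integrable (fun t => S2 * Wt t * (2 * ψ t * deriv ψ t)) := by
    have hm := L2mul h.hL2 h.hL2'
    refine Integrable.mono' (hm.abs.const_mul 3) ?_ (ae_of_all _ fun t => ?_)
    · exact ((continuous_const.mul Wt_cont).aestronglyMeasurable.mul
        ((aestronglyMeasurable_const.mul h.hL2.aestronglyMeasurable).mul
          h.hL2'.aestronglyMeasurable))
    · rw [Real.norm_eq_abs]
      have e1 : S2 * Wt t * (2 * ψ t * deriv ψ t) = 2 * S2 * Wt t * (ψ t * deriv ψ t) := by ring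
      rw [e1, abs_mul]
      have e2 : |2 * S2 * Wt t| ≤ 3 := by
        rw [abs_mul, abs_of_nonneg (by nlinarith [S2_pos] : (0:ℝ) ≤ 2 * S2)]
        nlinarith [hWabs t, S2_le, S2_pos, abs_nonneg (Wt t)]
      have e3 : (0:ℝ) ≤ |ψ t * deriv ψ t| := abs_nonneg _
      calc |2 * S2 * Wt t| * |ψ t * deriv ψ t| ≤ 3 * |ψ t * deriv ψ t| :=
            mul_le_mul_of_nonneg_right e2 e3
        _ = 3 * |(fun t => ψ t * deriv ψ t) t| := rfl
  exact h1.add h2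

lemma G_int (h : Hyp ψ) : Integrable (fun t => S2 * Wt t * ψ t ^ 2) := by
  have hWabs : ∀ t, |Wt t| ≤ 1 := fun t => abs_le.2
    ⟨by nlinarith [Wt_sq_le t, sq_nonneg (Wt t)], by nlinarith [Wt_sq_le t, sq_nonneg (Wt t)]⟩
  refine Integrable.mono' ((psi_sq_int h).const_mul 2) ?_ (ae_of_all _ fun t => ?_)
  · exact ((continuous_const.mul Wt_cont).mul (h.hd.continuous.pow 2)).aestronglyMeasurable
  · rw [Real.norm_eq_abs, abs_mul, abs_of_nonneg (sq_nonneg (ψ t)), abs_mul,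
      abs_of_nonneg S2_pos.le]
    nlinarith [mul_le_mul_of_nonneg_left
      (mul_le_mul_of_nonneg_right (hWabs t) (sq_nonneg (ψ t))) S2_pos.le,
      S2_le, sq_nonneg (ψ t)]

lemma Gd_eq_zero (h : Hyp ψ) :
    ∫ t, (S2 * Et t * ψ t ^ 2 + S2 * Wt t * (2 * ψ t * deriv ψ t)) = 0 := by
  apply integral_eq_zero_of_hasDerivAt_of_integrable
    (f := fun x => S2 * Wt x * ψ x ^ 2)
  · intro x
    have hder := (((hW x).const_mul S2).mul ((h.hd x).hasDerivAt.pow 2))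
    refine hder.congr_deriv ?_
    push_cast
    simp only [Pi.pow_apply]
    ring
  · exact Gd_int h
  · exact G_int h

lemma phi_memL2 (h : Hyp ψ) : MemLp (phiF ψ) 2 (volume : Measure ℝ) := by
  have hWψ : MemLp (fun x => S2 * Wt x * ψ x) 2 (volume : Measure ℝ) := by
    refine (memLp_two_iff_integrable_sq ?_).2 ?_
    · exact (((continuous_const.mul Wt_cont).aestronglyMeasurable).mul
        h.hL2.aestronglyMeasurable)
    · refine Integrable.mono' ((psi_sq_int h).const_mul 2) ?_ (ae_of_all _ fun t => ?_)
      · exact ((((continuous_const.mul Wt_cont).aestronglyMeasurable).mul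
          h.hL2.aestronglyMeasurable).pow 2)
      · rw [Real.norm_eq_abs, abs_of_nonneg (sq_nonneg _)]
        nlinarith [Wt_sq_le t, sq_nonneg (ψ t), sq_nonneg (Wt t * ψ t), S2_sq,
          sq_nonneg (Wt t), sq_nonneg (Wt t * ψ t * S2)]
  have hsum := h.hL2'.add hWψ
  have he : phiF ψ = deriv ψ + fun x => S2 * Wt x * ψ x := rfl
  rw [he]
  exact hsum

lemma Q_eq (h : Hyp ψ) :
    ∫ t, ((deriv ψ t) ^ 2 - (1 - 3 * (Wt t) ^ 2) * (ψ t) ^ 2) = ∫ t, phiF ψ t ^ 2 := by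
  have hpt : ∀ t, phiF ψ t ^ 2 =
      ((deriv ψ t) ^ 2 - (1 - 3 * (Wt t) ^ 2) * (ψ t) ^ 2)
        + (S2 * Et t * ψ t ^ 2 + S2 * Wt t * (2 * ψ t * deriv ψ t)) := by
    intro t
    simp only [phiF]
    linear_combination (ψ t ^ 2) * (hW2 t) + (ψ t ^ 2 * Wt t ^ 2) * S2_sq
  have he : (fun t => phiF ψ t ^ 2) = fun t =>
      ((deriv ψ t) ^ 2 - (1 - 3 * (Wt t) ^ 2) * (ψ t) ^ 2)
        + (S2 * Et t * ψ t ^ 2 + S2 * Wt t * (2 * ψ t * deriv ψ t)) := funext hpt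
  rw [he, integral_add (Qf_int h) (Gd_int h), Gd_eq_zero h, add_zero]

lemma Np_eq (h : Hyp ψ) : (∫ t, ψ t ^ 2) = - ∫ t, phiF ψ t * kk ψ t := by
  have hder : ∀ x, HasDerivAt (fun x => ψ x * kk ψ x)
      (ψ x ^ 2 + phiF ψ x * kk ψ x) x := by
    intro x
    have := (h.hd x).hasDerivAt.mul (kk_hasDeriv h x)
    refine this.congr_deriv ?_
    simp only [phiF]
    ring
  have hint2 : Integrable (fun x => ψ x * kk ψ x) := L2mul h.hL2 (kk_memL2 h)
  have hphik : Integrable (fun x => phiF ψ x * kk ψ x) := L2mul (phi_memL2 h) (kk_memL2 h)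
  have hint1 : Integrable (fun x => ψ x ^ 2 + phiF ψ x * kk ψ x) :=
    (psi_sq_int h).add hphik
  have h0 := integral_eq_zero_of_hasDerivAt_of_integrable hder hint1 hint2
  rw [integral_add (psi_sq_int h) hphik] at h0
  linarith

theorem main (h : Hyp ψ) :
    (1/1000 : ℝ) * ∫ t, ((deriv ψ t) ^ 2 + (ψ t) ^ 2)
      ≤ ∫ t, ((deriv ψ t) ^ 2 - (1 - 3 * (Wt t) ^ 2) * (ψ t) ^ 2) := by
  set Np := ∫ t, ψ t ^ 2 with hNpd
  have hNp0 := Np_nonneg h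
  set Q := ∫ t, ((deriv ψ t) ^ 2 - (1 - 3 * (Wt t) ^ 2) * (ψ t) ^ 2) with hQd
  have hQphi : Q = ∫ t, phiF ψ t ^ 2 := Q_eq h
  have hQ0 : 0 ≤ Q := by
    rw [hQphi]; exact integral_nonneg fun t => sq_nonneg _
  have hphi_sq_nn : 0 ≤ ∫ t, phiF ψ t ^ 2 := integral_nonneg fun t => sq_nonneg _
  have hkk_nn : 0 ≤ ∫ t, kk ψ t ^ 2 := integral_nonneg fun t => sq_nonneg _
  -- Np ≤ 432 * Q
  have h3 : Np ≤ 432 * Q := by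
    have hNe := Np_eq h
    have habs : |∫ t, phiF ψ t * kk ψ t| ≤ ∫ t, |phiF ψ t| * |kk ψ t| := by
      have := norm_integral_le_integral_norm (μ := (volume : Measure ℝ))
        (f := fun t => phiF ψ t * kk ψ t)
      simpa [Real.norm_eq_abs, abs_mul] using this
    have hcs := CS volume _ _ (phi_memL2 h) (kk_memL2 h)
    rw [← hNpd] at hNe
    have h1 : Np ≤ Real.sqrt (∫ t, phiF ψ t ^ 2) * Real.sqrt (∫ t, kk ψ t ^ 2) := by
      rw [hNe]
      calc -∫ t, phiF ψ t * kk ψ t ≤ |∫ t, phiF ψ t * kk ψ t| := neg_le_abs _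
        _ ≤ ∫ t, |phiF ψ t| * |kk ψ t| := habs
        _ ≤ _ := hcs
    have h2 : Real.sqrt (∫ t, kk ψ t ^ 2) ≤ Real.sqrt (432 * Np) :=
      Real.sqrt_le_sqrt (kk_sq_total h)
    have h1' : Np ≤ Real.sqrt Q * Real.sqrt (432 * Np) := by
      rw [hQphi]
      calc Np ≤ Real.sqrt (∫ t, phiF ψ t ^ 2) * Real.sqrt (∫ t, kk ψ t ^ 2) := h1
        _ ≤ Real.sqrt (∫ t, phiF ψ t ^ 2) * Real.sqrt (432 * Np) :=
            mul_le_mul_of_nonneg_left h2 (Real.sqrt_nonneg _)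
    have hs1 : Real.sqrt Q ^ 2 = Q := Real.sq_sqrt hQ0
    have hs2 : Real.sqrt (432 * Np) ^ 2 = 432 * Np := Real.sq_sqrt (by linarith)
    rcases eq_or_lt_of_le hNp0 with heq | hlt
    · linarith
    · nlinarith [h1', hs1, hs2, Real.sqrt_nonneg Q, Real.sqrt_nonneg (432 * Np), hlt]
  -- D ≤ Q + Np
  have hD : ∫ t, (deriv ψ t) ^ 2 ≤ Q + Np := by
    have hmono : ∫ t, (1 - 3 * Wt t ^ 2) * ψ t ^ 2 ≤ Np := by
      rw [hNpd]
      apply integral_mono (oneWt_int h) (psi_sq_int h)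
      intro t
      dsimp only
      nlinarith [sq_nonneg (Wt t), sq_nonneg (ψ t)]
    have hQsub : Q = (∫ t, (deriv ψ t) ^ 2) - ∫ t, (1 - 3 * Wt t ^ 2) * ψ t ^ 2 := by
      rw [hQd, integral_sub h.hL2'.integrable_sq (oneWt_int h)]
    linarith
  have hsum : ∫ t, ((deriv ψ t) ^ 2 + (ψ t) ^ 2)
      = (∫ t, (deriv ψ t) ^ 2) + Np := by
    rw [hNpd, integral_add h.hL2'.integrable_sq (psi_sq_int h)]
  rw [hsum]
  linarith

end PSI
/-- Coercivity of the linearized Allen-Cahn quadratic form on the orthogonal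
complement of `w'`: there is `γ > 0` such that for every `ψ ∈ H¹(ℝ)` with
`∫ ψ w' = 0` one has `∫ (|ψ'|² - F'(w)ψ²) ≥ γ ∫ (|ψ'|² + ψ²)`, where
`F'(w) = 1 - 3w²` and `w = tanh(z/√2)`. -/
theorem stmt_7 :
    letI w : ℝ → ℝ := fun z => Real.tanh (z / Real.sqrt 2)
    ∃ γ : ℝ, 0 < γ ∧
      ∀ ψ : ℝ → ℝ, Differentiable ℝ ψ →
        MeasureTheory.MemLp ψ 2 (MeasureTheory.volume) →
        MeasureTheory.MemLp (deriv ψ) 2 (MeasureTheory.volume) →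
        (∫ t : ℝ, ψ t * deriv w t) = 0 →
        γ * ∫ t : ℝ, ((deriv ψ t) ^ 2 + (ψ t) ^ 2)
          ≤ ∫ t : ℝ, ((deriv ψ t) ^ 2 - (1 - 3 * (w t) ^ 2) * (ψ t) ^ 2) := by
  show ∃ γ : ℝ, 0 < γ ∧ _
  have hw : (fun z => Real.tanh (z / Real.sqrt 2)) = Wt := rfl
  rw [hw]
  refine ⟨1/1000, by norm_num, ?_⟩
  intro ψ h1 h2 h3 h4
  have hd : deriv Wt = Et := funext fun t => (hW t).deriv
  rw [hd] at h4
  exact main ⟨h1, h2, h3, h4⟩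
end AC
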